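/- Let U be a consistent set of affine equations, C a non-tautological linear clause, and f an affine equation. Unit propagation on C from U can deduce f (i.e., ⟨C⟩ ⊆ span(U, f+𝟏), f ∉ span(U), f+𝟏 ∉ span(U), and ⟨C⟩ ⊄ span(U)) if and only if: every assignment satisfying C and all of U satisfies f, some assignment satisfies C and all of U, and neither f nor f+𝟏 lies in span(U). -/
import Mathlib


namespace XorSAT

/-- An affine equation over `n` Boolean variables: the coefficients of the `n`
variables together with a right-hand side, i.e. a vector in `F₂^(n+1)`. -/
abbrev Eqn (n : ℕ) : Type := (Fin n → ZMod 2) × ZMod 2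

/-- The equation `𝟏`, i.e. `0 = 1`, satisfied by no assignment. -/
def oneEq (n : ℕ) : Eqn n := (0, 1)

/-- An assignment `x` satisfies the equation `(a, b)` iff `∑ aᵢ xᵢ = b`. -/
def Sats {n : ℕ} (x : Fin n → ZMod 2) (e : Eqn n) : Prop :=
  (∑ i, e.1 i * x i) = e.2

/-- A linear clause: a (finite) disjunction of affine equations. -/
abbrev Clause (n : ℕ) : Type := Finset (Eqn n)

/-- An assignment satisfies a linear clause iff it satisfies some equation in it. -/
def SatsClause {n : ℕ} (x : Fin n → ZMod 2) (C : Clause n) : Prop :=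
  ∃ e ∈ C, Sats x e

/-- A clause is non-tautological if some assignment falsifies every equation of it. -/
def NonTaut {n : ℕ} (C : Clause n) : Prop :=
  ∃ x : Fin n → ZMod 2, ∀ e ∈ C, ¬ Sats x e

/-- The linear negation `⟨C⟩` of a clause `C = f₁ ∨ … ∨ f_m`:
the `F₂`-span of `f₁ + 𝟏, …, f_m + 𝟏`. -/
def linneg {n : ℕ} (C : Clause n) : Submodule (ZMod 2) (Eqn n) :=
  Submodule.span (ZMod 2) ((fun e => e + oneEq n) '' (C : Set (Eqn n)))

/-- A set of equations is consistent if some assignment satisfies all of them. -/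
def Consistent {n : ℕ} (U : Set (Eqn n)) : Prop :=
  ∃ x : Fin n → ZMod 2, ∀ e ∈ U, Sats x e

/-- The `F₂`-linear span of a set of equations, as a submodule. -/
def spn {n : ℕ} (U : Set (Eqn n)) : Submodule (ZMod 2) (Eqn n) :=
  Submodule.span (ZMod 2) U


/-! ### Auxiliary material -/

private lemma zmod2_cases (a : ZMod 2) : a = 0 ∨ a = 1 := by revert a; decide

/-- Evaluation of an affine equation at an assignment, as a linear functional. -/
def phi {n : ℕ} (x : Fin n → ZMod 2) : Eqn n →ₗ[ZMod 2] ZMod 2 where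
  toFun e := (∑ i, e.1 i * x i) + e.2
  map_add' a b := by
    simp only [Prod.fst_add, Pi.add_apply, Prod.snd_add, add_mul, Finset.sum_add_distrib]
    ring
  map_smul' c a := by
    simp only [Prod.smul_fst, Pi.smul_apply, smul_eq_mul, Prod.smul_snd, RingHom.id_apply,
      Finset.mul_sum, mul_add, mul_assoc]

lemma phi_oneEq {n : ℕ} (x : Fin n → ZMod 2) : phi x (oneEq n) = 1 := by
  simp [phi, oneEq]

lemma sats_iff_phi {n : ℕ} (x : Fin n → ZMod 2) (e : Eqn n) :
    Sats x e ↔ phi x e = 0 := by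
  unfold Sats phi
  simp only [LinearMap.coe_mk, AddHom.coe_mk]
  constructor
  · intro h; rw [h]; exact CharTwo.add_self_eq_zero e.2
  · intro h
    rcases zmod2_cases e.2 with h2 | h2 <;>
      rcases zmod2_cases (∑ i, e.1 i * x i) with hs | hs <;>
      rw [h2, hs] at h ⊢ <;> first | rfl | simp at h

lemma not_sats_iff_phi {n : ℕ} (x : Fin n → ZMod 2) (e : Eqn n) :
    ¬ Sats x e ↔ phi x e = 1 := by
  rw [sats_iff_phi]
  rcases zmod2_cases (phi x e) with h | h <;> rw [h] <;> simp

lemma phi_add_one {n : ℕ} (x : Fin n → ZMod 2) (e : Eqn n) :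
    phi x (e + oneEq n) = phi x e + 1 := by
  rw [map_add, phi_oneEq]

lemma not_sats_iff_phi_add_one {n : ℕ} (x : Fin n → ZMod 2) (e : Eqn n) :
    ¬ Sats x e ↔ phi x (e + oneEq n) = 0 := by
  rw [not_sats_iff_phi, phi_add_one]
  constructor
  · intro h; rw [h]; decide
  · intro h
    rcases zmod2_cases (phi x e) with h' | h' <;> rw [h'] at h ⊢ <;> simp_all

/-- Every equation decomposes over the standard basis. -/
lemma eqn_decomp {n : ℕ} (e : Eqn n) :
    e = (∑ i, e.1 i • ((Pi.single i 1 : Fin n → ZMod 2), (0 : ZMod 2)))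
        + e.2 • oneEq n := by
  ext j
  · simp [oneEq, Prod.fst_sum, Finset.sum_apply, Pi.single_apply, Finset.sum_ite_eq']
  · simp [oneEq, Prod.snd_sum]

/-- Every linear functional sending `𝟏` to `1` is an evaluation functional. -/
lemma exists_phi_eq {n : ℕ} (ψ : Eqn n →ₗ[ZMod 2] ZMod 2) (h1 : ψ (oneEq n) = 1) :
    ∃ x : Fin n → ZMod 2, ∀ e, phi x e = ψ e := by
  refine ⟨fun i => ψ ((Pi.single i 1 : Fin n → ZMod 2), 0), fun e => ?_⟩
  conv_rhs => rw [eqn_decomp e]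
  rw [map_add, map_sum, map_smul, h1]
  simp only [map_smul, smul_eq_mul, mul_one]
  unfold phi
  simp

/-- Separation: if `W` is consistent and `g ∉ W`, some assignment satisfies all of
`W` but not `g`. -/
lemma sep {n : ℕ} (W : Submodule (ZMod 2) (Eqn n))
    (hW : ∃ x, W ≤ LinearMap.ker (phi x)) {g : Eqn n} (hg : g ∉ W) :
    ∃ x, W ≤ LinearMap.ker (phi x) ∧ phi x g = 1 := by
  obtain ⟨ψ, hψg, hψW⟩ := W.exists_dual_map_eq_bot_of_notMem hg inferInstance
  have hψW' : W ≤ LinearMap.ker ψ := by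
    intro w hw
    rw [LinearMap.mem_ker]
    by_contra hne
    have : ψ w ∈ Submodule.map ψ W := ⟨w, hw, rfl⟩
    rw [hψW] at this
    exact hne this
  have hψg1 : ψ g = 1 := by
    rcases zmod2_cases (ψ g) with h | h
    · exact absurd h hψg
    · exact h
  obtain ⟨x₀, hx₀⟩ := hW
  rcases zmod2_cases (ψ (oneEq n)) with h1 | h1
  · rcases zmod2_cases (phi x₀ g) with hg0 | hg0
    · -- use ψ + phi x₀
      obtain ⟨x, hx⟩ := exists_phi_eq (ψ + phi x₀) (by
        simp [h1, phi_oneEq])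
      refine ⟨x, ?_, ?_⟩
      · intro w hw
        rw [LinearMap.mem_ker, hx]
        have h2 := hψW' hw
        have h3 := hx₀ hw
        rw [LinearMap.mem_ker] at h2 h3
        simp [h2, h3]
      · rw [hx]; simp [hψg1, hg0]
    · exact ⟨x₀, hx₀, hg0⟩
  · obtain ⟨x, hx⟩ := exists_phi_eq ψ h1
    refine ⟨x, ?_, ?_⟩
    · intro w hw
      rw [LinearMap.mem_ker, hx]
      exact hψW' hw
    · rw [hx]; exact hψg1

/-- Duality: membership in a consistent submodule is semantic entailment. -/
lemma mem_iff_semantic {n : ℕ} (W : Submodule (ZMod 2) (Eqn n))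
    (hW : ∃ x, W ≤ LinearMap.ker (phi x)) (g : Eqn n) :
    g ∈ W ↔ ∀ x, W ≤ LinearMap.ker (phi x) → phi x g = 0 := by
  constructor
  · intro hg x hx
    exact hx hg
  · intro h
    by_contra hg
    obtain ⟨x, hxW, hxg⟩ := sep W hW hg
    rw [h x hxW] at hxg
    exact absurd hxg (by decide)

lemma satsU_iff {n : ℕ} (x : Fin n → ZMod 2) (U : Set (Eqn n)) :
    (∀ e ∈ U, Sats x e) ↔ spn U ≤ LinearMap.ker (phi x) := by
  rw [spn, Submodule.span_le]
  constructor
  · intro h e he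
    rw [SetLike.mem_coe, LinearMap.mem_ker, ← sats_iff_phi]
    exact h e he
  · intro h e he
    rw [sats_iff_phi, ← LinearMap.mem_ker]
    exact h he

lemma not_satsClause_iff {n : ℕ} (x : Fin n → ZMod 2) (C : Clause n) :
    (¬ SatsClause x C) ↔ linneg C ≤ LinearMap.ker (phi x) := by
  rw [linneg, Submodule.span_le]
  constructor
  · intro h g hg
    obtain ⟨e, he, rfl⟩ := hg
    rw [SetLike.mem_coe, LinearMap.mem_ker, ← not_sats_iff_phi_add_one]
    exact fun hs => h ⟨e, he, hs⟩
  · rintro h ⟨e, he, hs⟩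
    have : phi x (e + oneEq n) = 0 := h ⟨e, he, rfl⟩
    rw [← not_sats_iff_phi_add_one] at this
    exact this hs

/-- Semantic characterization of unit propagation: for consistent
`U`, non-tautological `C` and an equation `f`, unit propagation on `C` from `U`
can deduce `f` iff `C ∧ U ⇒ f`, `C ∧ U` is satisfiable, and `f, f+𝟏 ∉ span U`. -/
theorem stmt8 {n : ℕ} (U : Set (Eqn n)) (hU : Consistent U)
    (C : Clause n) (hC : NonTaut C) (f : Eqn n) :
    (linneg C ≤ spn (insert (f + oneEq n) U) ∧ f ∉ spn U ∧ f + oneEq n ∉ spn U ∧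
        ¬ linneg C ≤ spn U) ↔
      ((∀ x : Fin n → ZMod 2, SatsClause x C → (∀ e ∈ U, Sats x e) → Sats x f) ∧
        (∃ x : Fin n → ZMod 2, SatsClause x C ∧ ∀ e ∈ U, Sats x e) ∧
        f ∉ spn U ∧ f + oneEq n ∉ spn U) := by
  obtain ⟨x₀, hx₀⟩ := hU
  have hUker : spn U ≤ LinearMap.ker (phi x₀) := (satsU_iff x₀ U).mp hx₀
  have hUcons : ∃ x, spn U ≤ LinearMap.ker (phi x) := ⟨x₀, hUker⟩
  -- characterization of the kernel condition for the extended span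
  have hins : ∀ x : Fin n → ZMod 2,
      spn (insert (f + oneEq n) U) ≤ LinearMap.ker (phi x) ↔
        (∀ e ∈ U, Sats x e) ∧ ¬ Sats x f := by
    intro x
    rw [spn, Submodule.span_le, Set.insert_subset_iff, satsU_iff x U, spn,
      Submodule.span_le, not_sats_iff_phi_add_one, and_comm]
    simp [SetLike.mem_coe, LinearMap.mem_ker]
  constructor
  · rintro ⟨h1, h2, h3, h4⟩
    refine ⟨?_, ?_, h2, h3⟩
    · intro x hxC hxU
      by_contra hf
      have hW' : spn (insert (f + oneEq n) U) ≤ LinearMap.ker (phi x) :=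
        (hins x).mpr ⟨hxU, hf⟩
      exact (not_satsClause_iff x C).mpr (h1.trans hW') hxC
    · by_contra hb
      push_neg at hb
      apply h4
      intro g hg
      rw [mem_iff_semantic (spn U) hUcons]
      intro x hx
      have hxU : ∀ e ∈ U, Sats x e := (satsU_iff x U).mpr hx
      have hnc : ¬ SatsClause x C := fun hc => by
        obtain ⟨e, he, hs⟩ := hb x hc
        exact hs (hxU e he)
      exact (not_satsClause_iff x C).mp hnc hg
  · rintro ⟨ha, ⟨x₁, hx₁C, hx₁U⟩, h2, h3⟩
    obtain ⟨x₂, hx₂U, hx₂f⟩ := sep (spn U) hUcons h2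
    have hx₂f' : ¬ Sats x₂ f := by rw [not_sats_iff_phi]; exact hx₂f
    have hW'cons : ∃ x, spn (insert (f + oneEq n) U) ≤ LinearMap.ker (phi x) :=
      ⟨x₂, (hins x₂).mpr ⟨(satsU_iff x₂ U).mpr hx₂U, hx₂f'⟩⟩
    refine ⟨?_, h2, h3, ?_⟩
    · rw [linneg, Submodule.span_le]
      rintro _ ⟨e, he, rfl⟩
      rw [SetLike.mem_coe, mem_iff_semantic _ hW'cons]
      intro x hx
      obtain ⟨hxU, hxf⟩ := (hins x).mp hx
      rw [← not_sats_iff_phi_add_one]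
      intro hs
      exact hxf (ha x ⟨e, he, hs⟩ hxU)
    · intro hle
      have : spn U ≤ LinearMap.ker (phi x₁) := (satsU_iff x₁ U).mp hx₁U
      exact (not_satsClause_iff x₁ C).mpr (hle.trans this) hx₁C

end XorSAT
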